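/- Let n ≥ 3 and let v : ℝ → ℝ be a positive twice-differentiable solution of v'' - ((n-2)^2/4) v + (n(n-2)/4) v^{(n+2)/(n-2)} = 0. Define u : ℝⁿ \ {0} → ℝ by u(x) = |x|^{(2-n)/2} v(-log|x|). Then u satisfies Δu + (n(n-2)/4) u^{(n+2)/(n-2)} = 0 on ℝⁿ \ {0}. -/

import Mathlib

/-- The Euclidean Laplacian as the sum of second directional derivatives
along the standard orthonormal basis. -/
noncomputable def eLaplacian {n : ℕ} (f : EuclideanSpace ℝ (Fin n) → ℝ)
    (x : EuclideanSpace ℝ (Fin n)) : ℝ :=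
  ∑ i : Fin n,
    fderiv ℝ (fun y => fderiv ℝ f y (EuclideanSpace.single i 1)) x
      (EuclideanSpace.single i 1)

/-- Auxiliary radial profile in the squared-radius variable. -/
noncomputable def Faux (a : ℝ) (v : ℝ → ℝ) (s : ℝ) : ℝ :=
  s ^ a * v (-(Real.log s) / 2)

/-- Auxiliary first-order combination showing up when differentiating `Faux`. -/
noncomputable def Vaux (a : ℝ) (v v' : ℝ → ℝ) : ℝ → ℝ :=
  fun t => a * v t - v' t / 2

lemma Vaux_hasDerivAt (a : ℝ) {v v' v'' : ℝ → ℝ}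
    (hv : ∀ t, HasDerivAt v (v' t) t) (hv' : ∀ t, HasDerivAt v' (v'' t) t) (t : ℝ) :
    HasDerivAt (Vaux a v v') (Vaux a v' v'' t) t :=
  ((hv t).const_mul a).sub ((hv' t).div_const 2)

lemma Faux_hasDerivAt (a : ℝ) {v v' : ℝ → ℝ}
    (hv : ∀ t, HasDerivAt v (v' t) t) {s : ℝ} (hs : 0 < s) :
    HasDerivAt (Faux a v) (Faux (a - 1) (Vaux a v v') s) s := by
  have h1 : HasDerivAt (fun y : ℝ => y ^ a) (a * s ^ (a - 1)) s :=
    Real.hasDerivAt_rpow_const (Or.inl hs.ne')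
  have hT : HasDerivAt (fun y : ℝ => -(Real.log y) / 2) (-(1 / s) / 2) s := by
    simpa [one_div] using ((Real.hasDerivAt_log hs.ne').neg).div_const 2
  have h2 : HasDerivAt (fun y : ℝ => v (-(Real.log y) / 2))
      (v' (-(Real.log s) / 2) * (-(1 / s) / 2)) s := (hv _).comp s hT
  have h3 := h1.mul h2
  have hpw : s ^ a = s ^ (a - 1) * s := by
    simpa using Real.rpow_add_one hs.ne' (a - 1)
  unfold Faux Vaux
  refine h3.congr_deriv ?_
  rw [hpw]
  field_simp
  ring

/-- The squared norm as a sum of squares of coordinates. -/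
noncomputable def Qaux (n : ℕ) (y : EuclideanSpace ℝ (Fin n)) : ℝ :=
  ∑ i, (y i) ^ 2

/-- The derivative of `Qaux`. -/
noncomputable def DQaux (n : ℕ) (y : EuclideanSpace ℝ (Fin n)) :
    EuclideanSpace ℝ (Fin n) →L[ℝ] ℝ :=
  ∑ i, (y i • (EuclideanSpace.proj i : EuclideanSpace ℝ (Fin n) →L[ℝ] ℝ)
    + y i • (EuclideanSpace.proj i : EuclideanSpace ℝ (Fin n) →L[ℝ] ℝ))

lemma Qaux_hasFDerivAt (n : ℕ) (y : EuclideanSpace ℝ (Fin n)) :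
    HasFDerivAt (Qaux n) (DQaux n y) y := by
  unfold Qaux DQaux
  apply HasFDerivAt.fun_sum
  intro i _
  have h : HasFDerivAt (fun z : EuclideanSpace ℝ (Fin n) => z i * z i) _ y :=
    ((EuclideanSpace.proj i : EuclideanSpace ℝ (Fin n) →L[ℝ] ℝ).hasFDerivAt
      (x := y)).mul ((EuclideanSpace.proj i : EuclideanSpace ℝ (Fin n) →L[ℝ] ℝ).hasFDerivAt
      (x := y))
  simpa [sq] using h

lemma DQaux_apply (n : ℕ) (y : EuclideanSpace ℝ (Fin n)) (i : Fin n) :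
    DQaux n y (EuclideanSpace.single i 1) = 2 * y i := by
  unfold DQaux
  simp [ContinuousLinearMap.sum_apply, EuclideanSpace.single_apply,
    ite_add_ite, Finset.sum_ite_eq', two_mul]

lemma Qaux_eq_norm_sq (n : ℕ) (y : EuclideanSpace ℝ (Fin n)) :
    Qaux n y = ‖y‖ ^ 2 := by
  have h : ‖y‖ ^ 2 = ∑ i, ‖y i‖ ^ 2 := by
    rw [EuclideanSpace.norm_eq, Real.sq_sqrt (by positivity)]
  rw [h]
  unfold Qaux
  simp [Real.norm_eq_abs, sq_abs]

theorem fowler_correspondence (n : ℕ) (hn : 3 ≤ n)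
    (v v' v'' : ℝ → ℝ) (hpos : ∀ t, 0 < v t)
    (hv : ∀ t, HasDerivAt v (v' t) t)
    (hv' : ∀ t, HasDerivAt v' (v'' t) t)
    (hode : ∀ t, v'' t - ((n - 2 : ℝ)^2 / 4) * v t
        + ((n : ℝ) * ((n : ℝ) - 2) / 4) * (v t) ^ (((n : ℝ) + 2) / ((n : ℝ) - 2)) = 0)
    (u : EuclideanSpace ℝ (Fin n) → ℝ)
    (hu : ∀ x, u x = ‖x‖ ^ (((2 : ℝ) - n) / 2) * v (-Real.log ‖x‖)) :
    ∀ x : EuclideanSpace ℝ (Fin n), x ≠ 0 →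
      eLaplacian u x
        + ((n : ℝ) * ((n : ℝ) - 2) / 4) * u x ^ (((n : ℝ) + 2) / ((n : ℝ) - 2)) = 0 := by
  intro x hx
  have hn3 : (3 : ℝ) ≤ (n : ℝ) := by exact_mod_cast hn
  have hN2 : (n : ℝ) - 2 ≠ 0 := by linarith
  have hxn : (0 : ℝ) < ‖x‖ := norm_pos_iff.mpr hx
  set a : ℝ := ((2 : ℝ) - n) / 4 with ha
  -- positivity of Q
  have hQpos : ∀ y : EuclideanSpace ℝ (Fin n), y ≠ 0 → 0 < Qaux n y := by
    intro y hy
    rw [Qaux_eq_norm_sq]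
    have : (0:ℝ) < ‖y‖ := norm_pos_iff.mpr hy
    positivity
  -- u = Faux a v ∘ Qaux away from 0
  have huQ : ∀ y : EuclideanSpace ℝ (Fin n), y ≠ 0 → u y = Faux a v (Qaux n y) := by
    intro y hy
    have hyn : (0:ℝ) < ‖y‖ := norm_pos_iff.mpr hy
    rw [hu, Faux, Qaux_eq_norm_sq]
    have h1 : ((‖y‖ ^ 2 : ℝ)) ^ a = ‖y‖ ^ (((2:ℝ) - n) / 2) := by
      rw [← Real.rpow_natCast ‖y‖ 2, ← Real.rpow_mul hyn.le]
      congr 1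
      rw [ha]; push_cast; ring
    have h2 : -(Real.log (‖y‖ ^ 2)) / 2 = -Real.log ‖y‖ := by
      rw [Real.log_pow]; push_cast; ring
    rw [h1, h2]
  -- first derivative of u away from 0
  have hud : ∀ y : EuclideanSpace ℝ (Fin n), y ≠ 0 → ∀ i : Fin n,
      fderiv ℝ u y (EuclideanSpace.single i 1)
        = Faux (a - 1) (Vaux a v v') (Qaux n y) * (2 * y i) := by
    intro y hy i
    have hcomp : HasFDerivAt (fun z => Faux a v (Qaux n z))
        (Faux (a - 1) (Vaux a v v') (Qaux n y) • DQaux n y) y :=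
      (Faux_hasDerivAt a hv (hQpos y hy)).comp_hasFDerivAt y (Qaux_hasFDerivAt n y)
    have hequ : u =ᶠ[nhds y] fun z => Faux a v (Qaux n z) := by
      filter_upwards [isOpen_compl_singleton.mem_nhds (by simpa using hy)] with z hz
      exact huQ z (by simpa using hz)
    rw [hequ.fderiv_eq, hcomp.fderiv]
    rw [ContinuousLinearMap.smul_apply, DQaux_apply]
    simp [smul_eq_mul]
  -- second directional derivatives
  have hsecond : ∀ i : Fin n,
      fderiv ℝ (fun y => fderiv ℝ u y (EuclideanSpace.single i 1)) x
          (EuclideanSpace.single i 1)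
        = Faux (a - 1) (Vaux a v v') (Qaux n x) * 2
          + (2 * x i) * (Faux (a - 1 - 1) (Vaux (a - 1) (Vaux a v v') (Vaux a v' v''))
              (Qaux n x) * (2 * x i)) := by
    intro i
    have hev : (fun y => fderiv ℝ u y (EuclideanSpace.single i 1))
        =ᶠ[nhds x] (fun y => Faux (a - 1) (Vaux a v v') (Qaux n y) * (2 * y i)) := by
      filter_upwards [isOpen_compl_singleton.mem_nhds (by simpa using hx)] with z hz
      exact hud z (by simpa using hz) i
    rw [hev.fderiv_eq]
    have hc : HasFDerivAt (fun y => Faux (a - 1) (Vaux a v v') (Qaux n y))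
        (Faux (a - 1 - 1) (Vaux (a - 1) (Vaux a v v') (Vaux a v' v'')) (Qaux n x)
          • DQaux n x) x :=
      (Faux_hasDerivAt (a - 1) (Vaux_hasDerivAt a hv hv') (hQpos x hx)).comp_hasFDerivAt
        x (Qaux_hasFDerivAt n x)
    have hd : HasFDerivAt (fun y : EuclideanSpace ℝ (Fin n) => 2 * y i)
        ((2:ℝ) • (EuclideanSpace.proj i : EuclideanSpace ℝ (Fin n) →L[ℝ] ℝ)) x :=
      ((EuclideanSpace.proj i : EuclideanSpace ℝ (Fin n) →L[ℝ] ℝ).hasFDerivAt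
        (x := x)).const_mul 2
    have h : HasFDerivAt (fun y : EuclideanSpace ℝ (Fin n) =>
        Faux (a - 1) (Vaux a v v') (Qaux n y) * (2 * y i)) _ x := hc.mul hd
    rw [h.fderiv]
    simp only [ContinuousLinearMap.add_apply, ContinuousLinearMap.smul_apply]
    rw [DQaux_apply]
    simp [smul_eq_mul, EuclideanSpace.single_apply]
  -- sum up
  set s₀ : ℝ := Qaux n x with hs₀def
  have hs₀ : 0 < s₀ := hQpos x hx
  set t₀ : ℝ := -(Real.log s₀) / 2 with ht₀def
  have hlap : eLaplacian u x
      = (n : ℝ) * (Faux (a - 1) (Vaux a v v') s₀ * 2)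
        + 4 * Faux (a - 1 - 1) (Vaux (a - 1) (Vaux a v v') (Vaux a v' v'')) s₀ * s₀ := by
    unfold eLaplacian
    rw [Finset.sum_congr rfl fun i _ => hsecond i, Finset.sum_add_distrib,
      Finset.sum_const, Finset.card_univ, Fintype.card_fin]
    have h2 : ∑ i : Fin n, (2 * x i)
        * (Faux (a - 1 - 1) (Vaux (a - 1) (Vaux a v v') (Vaux a v' v'')) s₀ * (2 * x i))
        = 4 * Faux (a - 1 - 1) (Vaux (a - 1) (Vaux a v v') (Vaux a v' v'')) s₀ * s₀ := by
      rw [hs₀def]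
      unfold Qaux
      rw [Finset.mul_sum]
      exact Finset.sum_congr rfl fun i _ => by ring
    rw [h2]
    ring
  -- the power of u
  have hux : u x ^ (((n : ℝ) + 2) / ((n : ℝ) - 2))
      = s₀ ^ (a - 1) * (v t₀) ^ (((n : ℝ) + 2) / ((n : ℝ) - 2)) := by
    rw [huQ x hx]
    show (s₀ ^ a * v t₀) ^ (((n : ℝ) + 2) / ((n : ℝ) - 2)) = _
    rw [Real.mul_rpow (Real.rpow_nonneg hs₀.le a) (hpos t₀).le,
      ← Real.rpow_mul hs₀.le]
    congr 2
    rw [ha]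
    field_simp
    ring
  have hA1 : s₀ ^ (a - 1) = s₀ ^ (a - 1 - 1) * s₀ := by
    simpa using Real.rpow_add_one hs₀.ne' (a - 1 - 1)
  rw [hlap, hux]
  unfold Faux Vaux
  rw [← ht₀def, hA1, ha]
  linear_combination (s₀ ^ (((2:ℝ) - n) / 4 - 1 - 1) * s₀) * hode t₀
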